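/- Consider the complete product-type regression f(x₁, x₂) = (1, x₁)ᵀ ⊗ (1, x₂)ᵀ = (1, x₂, x₁, x₁x₂)ᵀ on the design region [0,1]² and normal use conditions x_{u1} < 0, x_{u2} < 0. Let w_v* = |x_{uv}|/(1 + 2|x_{uv}|) for v = 1, 2. Then the four-point design ξ* assigning weights (1−w₁*)(1−w₂*), (1−w₁*)w₂*, w₁*(1−w₂*), w₁*w₂* to the points (0,0), (0,1), (1,0), (1,1), respectively, has invertible information matrix with f(x_{u1}, x_{u2})ᵀ M(ξ*)⁻¹ f(x_{u1}, x_{u2}) = (1 + 2|x_{u1}|)²(1 + 2|x_{u2}|)², and every approximate design ξ on [0,1]² with invertible M(ξ) satisfies f(x_{u1}, x_{u2})ᵀ M(ξ)⁻¹ f(x_{u1}, x_{u2}) ≥ (1 + 2|x_{u1}|)²(1 + 2|x_{u2}|)². Hence ξ* is c-optimal for extrapolation at (x_{u1}, x_{u2}). -/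

import Mathlib

open Matrix

/-- The complete product-type regression function
`f(x₁,x₂) = (1,x₁)ᵀ ⊗ (1,x₂)ᵀ` on `[0,1]²`. -/
noncomputable def fProd (z : ℝ × ℝ) : Fin 2 × Fin 2 → ℝ :=
  fun q => ![1, z.1] q.1 * ![1, z.2] q.2

/-- The information matrix `M(ξ) = Σᵢ wᵢ f(zᵢ) f(zᵢ)ᵀ` of an approximate design on `[0,1]²`
for the complete product-type regression `fProd`. -/
noncomputable def infoM {m : ℕ} (z : Fin m → ℝ × ℝ) (w : Fin m → ℝ) :
    Matrix (Fin 2 × Fin 2) (Fin 2 × Fin 2) ℝ :=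
  ∑ i, w i • vecMulVec (fProd (z i)) (fProd (z i))

set_option maxHeartbeats 1000000

lemma infoM_apply {m : ℕ} (z : Fin m → ℝ × ℝ) (w : Fin m → ℝ) (x y : Fin 2 × Fin 2) :
    infoM z w x y = ∑ i, w i * (fProd (z i) x * fProd (z i) y) := by
  simp [infoM, Matrix.sum_apply, vecMulVec_apply]

lemma bilin {m : ℕ} (z : Fin m → ℝ × ℝ) (w : Fin m → ℝ) (p q : Fin 2 × Fin 2 → ℝ) :
    p ⬝ᵥ (infoM z w *ᵥ q) = ∑ i, w i * (fProd (z i) ⬝ᵥ p) * (fProd (z i) ⬝ᵥ q) := by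
  simp only [dotProduct, mulVec, infoM_apply, Finset.mul_sum, Finset.sum_mul]
  conv_lhs => enter [2, x]; rw [Finset.sum_comm]
  rw [Finset.sum_comm]
  refine Finset.sum_congr rfl fun i _ => ?_
  rw [Finset.sum_comm]
  exact Finset.sum_congr rfl fun x _ => Finset.sum_congr rfl fun y _ => by ring

/-- Elfving-type certificate vector `u = (1,-2) ⊗ (1,-2)`. -/
noncomputable def uVec : Fin 2 × Fin 2 → ℝ := fun q => ![1, -2] q.1 * ![1, -2] q.2

lemma fdot_u (z : ℝ × ℝ) : fProd z ⬝ᵥ uVec = (1 - 2 * z.1) * (1 - 2 * z.2) := by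
  simp [fProd, uVec, dotProduct, Fintype.sum_prod_type, Fin.sum_univ_two]
  ring

/-- Explicit inverse of the information matrix of the optimal four-point design. -/
noncomputable def nInv (a b : ℝ) : Matrix (Fin 2 × Fin 2) (Fin 2 × Fin 2) ℝ :=
  fun p q => !![(1+2*a)/(1+a), -((1+2*a)/(1+a)); -((1+2*a)/(1+a)), (1+2*a)^2/(a*(1+a))] p.1 q.1 *
             !![(1+2*b)/(1+b), -((1+2*b)/(1+b)); -((1+2*b)/(1+b)), (1+2*b)^2/(b*(1+b))] p.2 q.2

lemma mulN (a b : ℝ) (ha : 0 < a) (hb : 0 < b) :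
    infoM ![(0, 0), (0, 1), (1, 0), (1, 1)]
      ![(1 - a / (1 + 2 * a)) * (1 - b / (1 + 2 * b)),
        (1 - a / (1 + 2 * a)) * (b / (1 + 2 * b)),
        (a / (1 + 2 * a)) * (1 - b / (1 + 2 * b)),
        (a / (1 + 2 * a)) * (b / (1 + 2 * b))] * nInv a b = 1 := by
  have h1 : (1 + 2 * a) ≠ 0 := by positivity
  have h2 : (1 + a) ≠ 0 := by positivity
  have h3 : (1 + 2 * b) ≠ 0 := by positivity
  have h4 : (1 + b) ≠ 0 := by positivity
  have h5 : a ≠ 0 := ne_of_gt ha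
  have h6 : b ≠ 0 := ne_of_gt hb
  ext ⟨i, j⟩ ⟨k, l⟩
  fin_cases i <;> fin_cases j <;> fin_cases k <;> fin_cases l <;>
    · simp only [Matrix.mul_apply, Fintype.sum_prod_type, Fin.sum_univ_two, infoM_apply,
        Fin.sum_univ_four, fProd, nInv, Matrix.one_apply, Matrix.cons_val_zero,
        Matrix.cons_val_one, Matrix.head_cons, Matrix.cons_val', Matrix.empty_val',
        Matrix.cons_val_fin_one, Matrix.head_fin_const, Prod.mk.injEq, Prod.fst, Prod.snd,
        Matrix.cons_val]
      norm_num
      all_goals (field_simp; try ring)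

lemma val2 (a b : ℝ) (ha : 0 < a) (hb : 0 < b) :
    fProd (-a, -b) ⬝ᵥ (nInv a b *ᵥ fProd (-a, -b)) = (1 + 2 * a) ^ 2 * (1 + 2 * b) ^ 2 := by
  have h2 : (1 + a) ≠ 0 := by positivity
  have h4 : (1 + b) ≠ 0 := by positivity
  have h5 : a ≠ 0 := ne_of_gt ha
  have h6 : b ≠ 0 := ne_of_gt hb
  simp [dotProduct, mulVec, Fintype.sum_prod_type, Fin.sum_univ_two, fProd, nInv]
  field_simp
  ring

/-- For the complete product-type regression on `[0,1]²` with use conditions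
`x_{u1} < 0`, `x_{u2} < 0`, the four-point product design with weights
`(1−w₁*)(1−w₂*), (1−w₁*)w₂*, w₁*(1−w₂*), w₁*w₂*` at `(0,0), (0,1), (1,0), (1,1)`, where
`w_v* = |x_{uv}|/(1+2|x_{uv}|)`, has invertible information matrix, attains criterion value
`(1+2|x_{u1}|)²(1+2|x_{u2}|)²`, and is `c`-optimal for extrapolation at `(x_{u1}, x_{u2})`. -/
theorem stmt13 (xu1 xu2 : ℝ) (hxu1 : xu1 < 0) (hxu2 : xu2 < 0) :
    IsUnit (infoM ![(0, 0), (0, 1), (1, 0), (1, 1)]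
      ![(1 - |xu1| / (1 + 2 * |xu1|)) * (1 - |xu2| / (1 + 2 * |xu2|)),
        (1 - |xu1| / (1 + 2 * |xu1|)) * (|xu2| / (1 + 2 * |xu2|)),
        (|xu1| / (1 + 2 * |xu1|)) * (1 - |xu2| / (1 + 2 * |xu2|)),
        (|xu1| / (1 + 2 * |xu1|)) * (|xu2| / (1 + 2 * |xu2|))]).det ∧
    fProd (xu1, xu2) ⬝ᵥ (infoM ![(0, 0), (0, 1), (1, 0), (1, 1)]
      ![(1 - |xu1| / (1 + 2 * |xu1|)) * (1 - |xu2| / (1 + 2 * |xu2|)),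
        (1 - |xu1| / (1 + 2 * |xu1|)) * (|xu2| / (1 + 2 * |xu2|)),
        (|xu1| / (1 + 2 * |xu1|)) * (1 - |xu2| / (1 + 2 * |xu2|)),
        (|xu1| / (1 + 2 * |xu1|)) * (|xu2| / (1 + 2 * |xu2|))])⁻¹ *ᵥ fProd (xu1, xu2) =
      (1 + 2 * |xu1|) ^ 2 * (1 + 2 * |xu2|) ^ 2 ∧
    ∀ {m : ℕ} (z : Fin m → ℝ × ℝ) (w : Fin m → ℝ),
      (∀ i, z i ∈ Set.Icc (0 : ℝ) 1 ×ˢ Set.Icc (0 : ℝ) 1) → (∀ i, 0 < w i) →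
      ∑ i, w i = 1 → IsUnit (infoM z w).det →
      (1 + 2 * |xu1|) ^ 2 * (1 + 2 * |xu2|) ^ 2 ≤
        fProd (xu1, xu2) ⬝ᵥ (infoM z w)⁻¹ *ᵥ fProd (xu1, xu2) := by
  have ha : 0 < |xu1| := abs_pos.mpr (ne_of_lt hxu1)
  have hb : 0 < |xu2| := abs_pos.mpr (ne_of_lt hxu2)
  have hx1 : xu1 = -|xu1| := by rw [abs_of_neg hxu1]; ring
  have hx2 : xu2 = -|xu2| := by rw [abs_of_neg hxu2]; ring
  have hMN := mulN |xu1| |xu2| ha hb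
  refine ⟨Matrix.isUnit_det_of_right_inverse hMN, ?_, ?_⟩
  · rw [Matrix.inv_eq_right_inv hMN, show ((xu1 : ℝ), (xu2 : ℝ)) = (-|xu1|, -|xu2|) by
      rw [← hx1, ← hx2]]
    exact val2 |xu1| |xu2| ha hb
  · intro m z w hz hw hw1 hdet
    set M := infoM z w with hM
    set c := fProd (xu1, xu2) with hc
    set v := M⁻¹ *ᵥ c with hv
    have hMv : M *ᵥ v = c := by
      rw [hv, Matrix.mulVec_mulVec, Matrix.mul_nonsing_inv M hdet, Matrix.one_mulVec]
    have htarget : c ⬝ᵥ (M⁻¹ *ᵥ c) = v ⬝ᵥ (M *ᵥ v) := by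
      rw [hMv, ← hv, dotProduct_comm]
    have huc : uVec ⬝ᵥ c = (1 + 2 * |xu1|) * (1 + 2 * |xu2|) := by
      rw [hc, dotProduct_comm, fdot_u]
      rw [abs_of_neg hxu1, abs_of_neg hxu2]; ring
    have hCS : (uVec ⬝ᵥ c) ^ 2 ≤ (uVec ⬝ᵥ (M *ᵥ uVec)) * (v ⬝ᵥ (M *ᵥ v)) := by
      rw [← hMv, bilin, bilin, bilin]
      refine Finset.sum_sq_le_sum_mul_sum_of_sq_eq_mul _
        (fun i _ => ?_) (fun i _ => ?_) (fun i _ => ?_)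
      · nlinarith [mul_self_nonneg (fProd (z i) ⬝ᵥ uVec), (hw i).le]
      · nlinarith [mul_self_nonneg (fProd (z i) ⬝ᵥ v), (hw i).le]
      · ring
    have huMu : uVec ⬝ᵥ (M *ᵥ uVec) ≤ 1 := by
      rw [bilin, ← hw1]
      refine Finset.sum_le_sum fun i _ => ?_
      obtain ⟨⟨h1a, h1b⟩, h2a, h2b⟩ := hz i
      have hA : |fProd (z i) ⬝ᵥ uVec| ≤ 1 := by
        rw [fdot_u, abs_mul]
        have e1 : |1 - 2 * (z i).1| ≤ 1 := by rw [abs_le]; constructor <;> linarith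
        have e2 : |1 - 2 * (z i).2| ≤ 1 := by rw [abs_le]; constructor <;> linarith
        calc |1 - 2 * (z i).1| * |1 - 2 * (z i).2| ≤ 1 * 1 :=
              mul_le_mul e1 e2 (abs_nonneg _) zero_le_one
          _ = 1 := by ring
      have hsq : (fProd (z i) ⬝ᵥ uVec) * (fProd (z i) ⬝ᵥ uVec) ≤ 1 := by
        have := abs_mul_abs_self (fProd (z i) ⬝ᵥ uVec)
        nlinarith [abs_nonneg (fProd (z i) ⬝ᵥ uVec)]
      nlinarith [(hw i).le]
    have hvMv : 0 ≤ v ⬝ᵥ (M *ᵥ v) := by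
      rw [bilin]
      exact Finset.sum_nonneg fun i _ => by
        nlinarith [(hw i).le, sq_nonneg (fProd (z i) ⬝ᵥ v)]
    have key : (uVec ⬝ᵥ c) ^ 2 ≤ v ⬝ᵥ (M *ᵥ v) :=
      hCS.trans (by simpa using mul_le_mul_of_nonneg_right huMu hvMv)
    rw [← htarget] at key
    calc (1 + 2 * |xu1|) ^ 2 * (1 + 2 * |xu2|) ^ 2 = (uVec ⬝ᵥ c) ^ 2 := by rw [huc]; ring
      _ ≤ _ := key
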